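/- Fix n ≥ 1 and a subset S = {s_1, ..., s_k} of {1, ..., n-1} with s_1 < ... < s_k, and set s_0 = 0 and s_{k+1} = n. Then the set of permutations π of {1, ..., n} with A(π) ⊆ S is in bijection with the Cartesian product CC_n(S) = [0,k]^{s_{k+1}-s_k} × [0,k-1]^{s_k-s_{k-1}} × ... × [0,1]^{s_2-s_1} × [0,0]^{s_1-s_0}; in particular the two sets have the same cardinality. -/

import Mathlib

/-- The `i`-th value (1-indexed) of the permutation `π` of `{1, …, n}`, i.e. `a_i ∈ {1, …, n}`.
For `i` outside `{1, …, n}` a junk value is returned. -/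
def pval {n : ℕ} (π : Equiv.Perm (Fin n)) (i : ℕ) : ℕ :=
  if h : i - 1 < n then (π ⟨i - 1, h⟩ : ℕ) + 1 else 0

/-- The set of ascent bottoms `A(π) = { a_i : i ∈ {1, …, n-1}, a_i < a_{i+1} }`. -/
def ascentBottoms {n : ℕ} (π : Equiv.Perm (Fin n)) : Finset ℕ :=
  ((Finset.Icc 1 (n - 1)).filter fun i => pval π i < pval π (i + 1)).image (pval π)

/-- For `S = {s_1 < s_2 < ⋯ < s_k} ⊆ {1, …, n-1}`, `sVal n S r` is `s_r`, with the
conventions `s_0 = 0` and `s_{k+1} = n`. -/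
def sVal (n : ℕ) (S : Finset ℕ) (r : ℕ) : ℕ :=
  if r = 0 then 0 else if r = S.card + 1 then n else (S.sort (· ≤ ·)).getD (r - 1) 0

/-- The set of construction choices
`CC_n(S) = [0,k]^(s_{k+1}-s_k) × [0,k-1]^(s_k-s_{k-1}) × ⋯ × [0,0]^(s_1-s_0)`, encoded as
the dependent Cartesian product over `r ∈ {1, …, k+1}` of `(s_r - s_{r-1})` many copies of
`[0, r-1]` (the factor indexed by `r : Fin (k+1)` is `[0,r]^(s_{r+1}-s_r)`). -/
def CC (n : ℕ) (S : Finset ℕ) : Type :=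
  (r : Fin (S.card + 1)) → Fin (sVal n S ((r : ℕ) + 1) - sVal n S (r : ℕ)) → Fin ((r : ℕ) + 1)

/-- The ascent-bottom condition for words. -/
def OkS (S : Finset ℕ) (w : List ℕ) : Prop :=
  List.Chain' (fun a b => a < b → a ∈ S) w

instance (S : Finset ℕ) (w : List ℕ) : Decidable (OkS S w) := by
  unfold OkS List.Chain'; infer_instance

lemma okS_iff_getElem (S : Finset ℕ) (w : List ℕ) :
    OkS S w ↔ ∀ i (h : i + 1 < w.length), w[i] < w[i+1] → w[i] ∈ S := by
  rw [OkS]; unfold List.Chain'; refine List.isChain_iff_getElem.trans ?_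
  constructor
  · intro H i h
    have := H i (by omega)
    simpa using this
  · intro H i h
    have := H i (by omega)
    simpa using this

/-- Splitting lemma: inserting the maximum. -/
lemma okS_split (S : Finset ℕ) {m : ℕ} {l₁ l₂ : List ℕ} (h : ∀ x ∈ l₁ ++ l₂, x < m) :
    OkS S (l₁ ++ m :: l₂) ↔ OkS S (l₁ ++ l₂) ∧ ∀ x ∈ l₁.getLast?, x ∈ S := by
  unfold OkS List.Chain'
  rw [List.isChain_append, List.isChain_append, List.isChain_cons]
  have h₁ : ∀ x ∈ l₁, x < m := fun x hx => h x (by simp [hx])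
  have h₂ : ∀ x ∈ l₂, x < m := fun x hx => h x (by simp [hx])
  constructor
  · rintro ⟨c1, ⟨hm, c2⟩, cross⟩
    have hlast : ∀ x ∈ l₁.getLast?, x ∈ S := by
      intro x hx
      have hxm : x ∈ l₁ := List.mem_of_mem_getLast? hx
      exact cross x hx m (by simp) (h₁ x hxm)
    refine ⟨⟨c1, c2, ?_⟩, hlast⟩
    · intro x hx y hy _
      exact hlast x hx
  · rintro ⟨⟨c1, c2, _⟩, hlast⟩
    refine ⟨c1, ⟨?_, c2⟩, ?_⟩
    · intro y hy hmy
      exact absurd hmy (by have := h₂ y (List.mem_of_mem_head? hy); omega)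
    · intro x hx y hy _
      exact hlast x hx

open List

/-- The finite set of admissible words on `{1, …, m}`. -/
def W (S : Finset ℕ) (m : ℕ) : Finset (List ℕ) :=
  ((List.range' 1 m).permutations.toFinset).filter (OkS S)

lemma mem_W {S : Finset ℕ} {m : ℕ} {w : List ℕ} :
    w ∈ W S m ↔ w ~ List.range' 1 m ∧ OkS S w := by
  simp [W, List.mem_permutations]

lemma range'_succ_concat (m : ℕ) : List.range' 1 (m + 1) = List.range' 1 m ++ [m + 1] := by
  rw [List.range'_concat]; norm_num [Nat.add_comm]

lemma notmem_range' (m : ℕ) : (m + 1) ∉ List.range' 1 m := by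
  simp [List.mem_range'_1]; omega

lemma W_decomp {S : Finset ℕ} {m : ℕ} {w : List ℕ} (hw : w ∈ W S (m + 1)) :
    ∃ l₁ l₂ : List ℕ, w = l₁ ++ (m + 1) :: l₂ ∧
      w.erase (m + 1) = l₁ ++ l₂ ∧ (l₁ ++ l₂) ~ List.range' 1 m ∧
      (∀ x ∈ l₁ ++ l₂, x < m + 1) ∧ OkS S (l₁ ++ l₂) ∧ (∀ x ∈ l₁.getLast?, x ∈ S) := by
  obtain ⟨hperm, hok⟩ := mem_W.1 hw
  have hmem : (m + 1) ∈ w := hperm.mem_iff.2 (by simp [List.mem_range'_1])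
  obtain ⟨l₁, l₂, rfl⟩ := List.append_of_mem hmem
  have hnd : (l₁ ++ (m + 1) :: l₂).Nodup :=
    hperm.nodup_iff.2 (List.nodup_range' (s := 1) (n := m + 1))
  have h1 : (m + 1) ∉ l₁ := by
    intro h
    exact (List.disjoint_of_nodup_append hnd) h (by simp)
  have h2 : (m + 1) ∉ l₂ := by
    have := (List.nodup_append.1 hnd).2.1
    simp [List.nodup_cons] at this
    exact this.1
  have herase : (l₁ ++ (m + 1) :: l₂).erase (m + 1) = l₁ ++ l₂ := by
    rw [List.erase_append_right _ h1, List.erase_cons_head]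
  have hperm' : (l₁ ++ l₂) ~ List.range' 1 m := by
    have := hperm.erase (m + 1)
    rw [herase, range'_succ_concat, List.erase_append_right _ (notmem_range' m),
      List.erase_cons_head, List.append_nil] at this
    exact this
  have hub : ∀ x ∈ l₁ ++ l₂, x < m + 1 := by
    intro x hx
    have := hperm'.mem_iff.1 hx
    rw [List.mem_range'_1] at this
    omega
  have := (okS_split S hub).1 hok
  exact ⟨l₁, l₂, rfl, herase, hperm', hub, this.1, this.2⟩

/-- insertion of `m+1` into `w'` at index `i`. -/
def ins (m i : ℕ) (w' : List ℕ) : List ℕ := w'.take i ++ (m + 1) :: w'.drop i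

lemma ins_mem_fiber {S : Finset ℕ} {m : ℕ} {w' : List ℕ} (hw' : w' ∈ W S m)
    {i : ℕ} (hi : i ≤ w'.length) (hall : ∀ x ∈ (w'.take i).getLast?, x ∈ S) :
    ins m i w' ∈ W S (m + 1) ∧ (ins m i w').erase (m + 1) = w' := by
  obtain ⟨hperm, hok⟩ := mem_W.1 hw'
  have hub : ∀ x ∈ w', x < m + 1 := by
    intro x hx
    have := hperm.mem_iff.1 hx
    rw [List.mem_range'_1] at this
    omega
  have htd : w'.take i ++ w'.drop i = w' := List.take_append_drop i w'
  have hub' : ∀ x ∈ w'.take i ++ w'.drop i, x < m + 1 := by rw [htd]; exact hub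
  have h1 : (m + 1) ∉ w'.take i := fun h => by
    have := hub _ (List.mem_of_mem_take h); omega
  constructor
  · rw [mem_W]
    constructor
    · calc ins m i w' ~ (m + 1) :: (w'.take i ++ w'.drop i) := List.perm_middle
        _ = (m + 1) :: w' := by rw [htd]
        _ ~ (m + 1) :: List.range' 1 m := hperm.cons _
        _ ~ List.range' 1 (m + 1) := by
            rw [range'_succ_concat]
            exact (List.perm_append_singleton _ _).symm
    · rw [ins, okS_split S hub', htd]
      exact ⟨hok, hall⟩
  · rw [ins, List.erase_append_right _ h1, List.erase_cons_head, htd]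

lemma fiber_card {S : Finset ℕ} (hS1 : ∀ s ∈ S, 1 ≤ s) {m : ℕ} {w' : List ℕ}
    (hw' : w' ∈ W S m) :
    ((W S (m + 1)).filter (fun w => w.erase (m + 1) = w')).card
      = (S.filter (· < m + 1)).card + 1 := by
  obtain ⟨hperm, hok⟩ := mem_W.1 hw'
  have hlen : w'.length = m := by rw [hperm.length_eq, List.length_range']
  have hnd : w'.Nodup := hperm.nodup_iff.2 (List.nodup_range' (s := 1) (n := m))
  have hub : ∀ x ∈ w', x < m + 1 := by
    intro x hx
    have := hperm.mem_iff.1 hx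
    rw [List.mem_range'_1] at this
    omega
  -- the index set
  set I : Finset ℕ := (Finset.range (w'.length + 1)).filter
      (fun i => ∀ x ∈ (w'.take i).getLast?, x ∈ S) with hI
  have step1 : I.card = ((W S (m + 1)).filter (fun w => w.erase (m + 1) = w')).card := by
    apply Finset.card_bij (fun i _ => ins m i w')
    · intro i hi
      rw [hI, Finset.mem_filter, Finset.mem_range] at hi
      obtain ⟨hle, hall⟩ := hi
      have := ins_mem_fiber hw' (by omega) hall
      rw [Finset.mem_filter]
      exact ⟨this.1, this.2⟩
    · intro i hi j hj hij
      rw [hI, Finset.mem_filter, Finset.mem_range] at hi hj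
      by_contra hne
      wlog hlt : i < j generalizing i j
      · exact this j hj i hi hij.symm (Ne.symm hne) (by omega)
      have hti : (w'.take i).length = i := by rw [List.length_take]; omega
      have htj : (w'.take j).length = j := by rw [List.length_take]; omega
      have hleni : (ins m i w').length = w'.length + 1 := by
        simp only [ins, List.length_append, List.length_cons, List.length_take,
          List.length_drop]
        omega
      have hlenj : (ins m j w').length = w'.length + 1 := by
        simp only [ins, List.length_append, List.length_cons, List.length_take,
          List.length_drop]
        omega
      have h1 : (ins m i w')[i]? = some (m + 1) := by
        rw [ins, List.getElem?_append_right hti.le, hti]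
        simp
      have h2 : (ins m j w')[i]? = w'[i]? := by
        rw [ins, List.getElem?_append_left (lt_of_lt_of_eq hlt htj.symm), List.getElem?_take, if_pos hlt]
      rw [hij, h2, List.getElem?_eq_getElem (by omega)] at h1
      have := hub _ (List.getElem_mem (l := w') (n := i) (by omega))
      simp at h1
      omega
    · intro w hwf
      rw [Finset.mem_filter] at hwf
      obtain ⟨hwW, hwe⟩ := hwf
      obtain ⟨l₁, l₂, rfl, herase, hperm2, hub2, hok2, hlast2⟩ := W_decomp hwW
      rw [herase] at hwe
      refine ⟨l₁.length, ?_, ?_⟩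
      · rw [hI, Finset.mem_filter, Finset.mem_range]
        constructor
        · rw [← hwe]; simp
        · rw [← hwe, List.take_left]
          exact hlast2
      · rw [ins, ← hwe, List.take_left, List.drop_left]
  rw [← step1]
  -- compute I.card
  have hgl : ∀ j (hj : j < w'.length), (w'.take (j + 1)).getLast? = some (w'[j]) := by
    intro j hj
    rw [List.take_succ, List.getElem?_eq_getElem hj, Option.toList_some,
      List.getLast?_concat]
  have hIeq : I = insert 0 (((Finset.range w'.length).filter
      (fun j => w'.getD j 0 ∈ S)).image (· + 1)) := by
    ext i
    rw [hI, Finset.mem_filter, Finset.mem_range, Finset.mem_insert, Finset.mem_image]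
    constructor
    · rintro ⟨hle, hall⟩
      cases i with
      | zero => exact Or.inl rfl
      | succ j =>
        refine Or.inr ⟨j, ?_, rfl⟩
        rw [Finset.mem_filter, Finset.mem_range]
        have hj : j < w'.length := by omega
        refine ⟨hj, ?_⟩
        rw [List.getD_eq_getElem _ _ hj]
        apply hall
        rw [hgl j hj]
        simp
    · rintro (rfl | ⟨j, hj, rfl⟩)
      · exact ⟨by omega, by simp⟩
      · rw [Finset.mem_filter, Finset.mem_range] at hj
        obtain ⟨hj, hjS⟩ := hj
        refine ⟨by omega, ?_⟩
        intro x hx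
        rw [hgl j hj] at hx
        simp at hx
        rw [List.getD_eq_getElem _ _ hj] at hjS
        rwa [← hx]
  rw [hIeq, Finset.card_insert_of_notMem (by simp), Finset.card_image_of_injective _
    (add_left_injective 1)]
  -- count positions with value in S
  have : ((Finset.range w'.length).filter (fun j => w'.getD j 0 ∈ S)).card
      = (S.filter (· < m + 1)).card := by
    apply Finset.card_bij (fun j _ => w'.getD j 0)
    · intro j hj
      rw [Finset.mem_filter, Finset.mem_range] at hj
      rw [Finset.mem_filter]
      rw [List.getD_eq_getElem _ _ hj.1] at hj ⊢
      exact ⟨hj.2, hub _ (List.getElem_mem _)⟩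
    · intro i hi j hj hij
      rw [Finset.mem_filter, Finset.mem_range] at hi hj
      rw [List.getD_eq_getElem _ _ hi.1, List.getD_eq_getElem _ _ hj.1] at hij
      exact (hnd.getElem_inj_iff).1 hij
    · intro s hs
      rw [Finset.mem_filter] at hs
      have hsw : s ∈ w' := by
        rw [hperm.mem_iff, List.mem_range'_1]
        exact ⟨hS1 s hs.1, by omega⟩
      obtain ⟨j, hjl, hjs⟩ := List.getElem_of_mem hsw
      exact ⟨j, by rw [Finset.mem_filter, Finset.mem_range,
        List.getD_eq_getElem _ _ hjl, hjs]; exact ⟨hjl, hs.1⟩, by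
        rw [List.getD_eq_getElem _ _ hjl, hjs]⟩
  omega

lemma erase_mem_W {S : Finset ℕ} {m : ℕ} {w : List ℕ} (hw : w ∈ W S (m + 1)) :
    w.erase (m + 1) ∈ W S m := by
  obtain ⟨l₁, l₂, rfl, herase, hperm', hub, hok', -⟩ := W_decomp hw
  rw [herase, mem_W]
  exact ⟨hperm', hok'⟩

lemma W_card {S : Finset ℕ} (hS1 : ∀ s ∈ S, 1 ≤ s) :
    ∀ m : ℕ, (W S m).card = ∏ v ∈ Finset.range m, ((S.filter (· < v + 1)).card + 1) := by
  intro m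
  induction m with
  | zero =>
    have : W S 0 = {[]} := by
      ext w
      rw [mem_W]
      simp [OkS]
      rintro rfl
      exact List.isChain_nil
    rw [this]
    simp
  | succ m ih =>
    have hfib := Finset.card_eq_sum_card_fiberwise
      (f := fun w => w.erase (m + 1)) (s := W S (m + 1)) (t := W S m)
      (fun w hw => erase_mem_W hw)
    rw [hfib, Finset.sum_congr rfl (fun w' hw' => fiber_card hS1 hw'), Finset.sum_const,
      smul_eq_mul, ih, Finset.prod_range_succ, mul_comm]

/-- the word of a permutation -/
def word {n : ℕ} (π : Equiv.Perm (Fin n)) : List ℕ :=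
  List.ofFn (fun i => (π i : ℕ) + 1)

lemma word_length {n : ℕ} (π : Equiv.Perm (Fin n)) : (word π).length = n := by
  rw [word, List.length_ofFn]

lemma word_getElem {n : ℕ} (π : Equiv.Perm (Fin n)) {i : ℕ} (hi : i < n) :
    (word π)[i]'(by rw [word_length]; exact hi) = (π ⟨i, hi⟩ : ℕ) + 1 := by
  simp only [word, List.getElem_ofFn]

lemma word_perm {n : ℕ} (π : Equiv.Perm (Fin n)) : word π ~ List.range' 1 n := by
  have h1 : (List.finRange n).map ⇑π ~ List.finRange n := by
    apply List.perm_of_nodup_nodup_toFinset_eq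
    · exact (List.nodup_finRange n).map π.injective
    · exact List.nodup_finRange n
    · ext x
      simp
      exact ⟨π.symm x, by simp⟩
  have h2 : (List.finRange n).map (fun i : Fin n => (i : ℕ) + 1) = List.range' 1 n := by
    rw [List.range'_eq_map_range, ← List.map_coe_finRange_eq_range (n := n), List.map_map]
    congr 1
    ext i
    simp [Nat.add_comm]
  have h3 : word π = ((List.finRange n).map ⇑π).map (fun i : Fin n => (i : ℕ) + 1) := by
    rw [word, List.ofFn_eq_map, List.map_map]
    rfl
  rw [h3]
  exact h2 ▸ (h1.map _)

lemma pval_eq_word {n : ℕ} (π : Equiv.Perm (Fin n)) {j : ℕ} (hj : j < n) :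
    pval π (j + 1) = (word π)[j]'(by rw [word_length]; exact hj) := by
  rw [pval]
  simp only [Nat.add_sub_cancel]
  rw [dif_pos hj, word_getElem]

lemma ab_iff {n : ℕ} (hn : 1 ≤ n) (S : Finset ℕ) (π : Equiv.Perm (Fin n)) :
    ascentBottoms π ⊆ S ↔ OkS S (word π) := by
  rw [ascentBottoms, Finset.image_subset_iff, okS_iff_getElem]
  constructor
  · intro h j hj hlt
    rw [word_length] at hj
    have hj' : j < n := by omega
    have h1 : pval π (j + 1) = (word π)[j]'(by rw [word_length]; omega) :=
      pval_eq_word π hj'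
    have h2 : pval π (j + 1 + 1) = (word π)[j + 1]'(by rw [word_length]; omega) :=
      pval_eq_word π (by omega)
    have := h (j + 1) (by
      rw [Finset.mem_filter, Finset.mem_Icc]
      refine ⟨⟨by omega, by omega⟩, ?_⟩
      rw [h1, h2]
      exact hlt)
    rwa [h1] at this
  · intro h i hi
    rw [Finset.mem_filter, Finset.mem_Icc] at hi
    obtain ⟨⟨hi1, hi2⟩, hasc⟩ := hi
    obtain ⟨j, rfl⟩ : ∃ j, i = j + 1 := ⟨i - 1, by omega⟩
    have hj : j + 1 < (word π).length := by rw [word_length]; omega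
    have h1 := pval_eq_word π (show j < n by omega)
    have h2 := pval_eq_word π (show j + 1 < n by omega)
    rw [h1]
    apply h j hj
    rw [← h1, ← h2]
    exact hasc

lemma A_card_eq_W_card (n : ℕ) (hn : 1 ≤ n) (S : Finset ℕ) :
    (Finset.univ.filter (fun π : Equiv.Perm (Fin n) => ascentBottoms π ⊆ S)).card
      = (W S n).card := by
  apply Finset.card_bij (fun π _ => word π)
  · intro π hπ
    rw [Finset.mem_filter] at hπ
    rw [mem_W]
    exact ⟨word_perm π, (ab_iff hn S π).1 hπ.2⟩
  · intro π hπ σ hσ h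
    ext i
    have hi : (i : ℕ) < n := i.isLt
    have h1 : (word π)[(i : ℕ)]? = (word σ)[(i : ℕ)]? := by rw [h]
    rw [List.getElem?_eq_getElem (by rw [word_length]; exact hi),
      List.getElem?_eq_getElem (by rw [word_length]; exact hi),
      word_getElem π hi, word_getElem σ hi] at h1
    simp at h1
    have : π ⟨i, hi⟩ = σ ⟨i, hi⟩ := Fin.ext h1
    simpa using congrArg Fin.val this
  · intro w hw
    obtain ⟨hperm, hok⟩ := mem_W.1 hw
    have hlen : w.length = n := by rw [hperm.length_eq, List.length_range']
    have hbound : ∀ j (hj : j < n), 1 ≤ w[j]'(by omega) ∧ w[j]'(by omega) ≤ n := by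
      intro j hj
      have := hperm.mem_iff.1 (List.getElem_mem (l := w) (n := j) (by omega))
      rw [List.mem_range'_1] at this
      omega
    set g : Fin n → Fin n := fun i => ⟨w[(i : ℕ)]'(by omega) - 1, by
      have := hbound i i.isLt; omega⟩ with hg
    have hginj : Function.Injective g := by
      intro i j hij
      have hi := hbound i i.isLt
      have hj := hbound j j.isLt
      have : w[(i : ℕ)]'(by omega) = w[(j : ℕ)]'(by omega) := by
        have := congrArg Fin.val hij
        simp only [hg] at this
        omega
      have hnd : w.Nodup := hperm.nodup_iff.2 (List.nodup_range' (s := 1) (n := n))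
      exact Fin.ext ((hnd.getElem_inj_iff).1 this)
    have hgbij : Function.Bijective g := Finite.injective_iff_bijective.mp hginj
    have hword : word (Equiv.ofBijective g hgbij) = w := by
      apply List.ext_getElem (by rw [word_length, hlen])
      intro j h1 h2
      have hj : j < n := by rwa [word_length] at h1
      rw [word_getElem _ hj]
      simp only [Equiv.ofBijective_apply, hg]
      exact Nat.sub_add_cancel (hbound j hj).1
    refine ⟨Equiv.ofBijective g hgbij, Finset.mem_filter.2 ⟨Finset.mem_univ _, ?_⟩, hword⟩
    exact (ab_iff hn S _).2 (hword ▸ hok)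

section SVal

variable {n : ℕ} {S : Finset ℕ}

lemma sVal_zero : sVal n S 0 = 0 := by simp [sVal]

lemma sVal_top : sVal n S (S.card + 1) = n := by simp [sVal]

lemma sVal_mid {j : ℕ} (h1 : 1 ≤ j) (h2 : j ≤ S.card) :
    sVal n S j = (S.sort (· ≤ ·))[j - 1]'(by rw [Finset.length_sort]; omega) := by
  rw [sVal, if_neg (by omega), if_neg (by omega),
    List.getD_eq_getElem _ _ (by rw [Finset.length_sort]; omega)]

lemma sort_mem_S {i : ℕ} (hi : i < S.card) :
    (S.sort (· ≤ ·))[i]'(by rw [Finset.length_sort]; omega) ∈ S := by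
  rw [← Finset.mem_sort (α := ℕ) (· ≤ ·)]
  exact List.getElem_mem _

lemma sort_lt {i j : ℕ} (hij : i < j) (hj : j < S.card) :
    (S.sort (· ≤ ·))[i]'(by rw [Finset.length_sort]; omega)
      < (S.sort (· ≤ ·))[j]'(by rw [Finset.length_sort]; omega) :=
  List.pairwise_iff_getElem.1 (Finset.sortedLT_sort S).pairwise i j _ _ hij

lemma sVal_mono (hS : S ⊆ Finset.Icc 1 (n - 1)) (hn : 1 ≤ n) {j : ℕ} (hj : j ≤ S.card) :
    sVal n S j ≤ sVal n S (j + 1) := by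
  rcases Nat.eq_or_lt_of_le hj with rfl | hlt
  · rcases Nat.eq_zero_or_pos S.card with h0 | hpos
    · rw [h0]; rw [h0] at *
      simp [sVal_zero, sVal]
    · rw [sVal_top, sVal_mid hpos le_rfl]
      have := hS (sort_mem_S (show S.card - 1 < S.card by omega))
      rw [Finset.mem_Icc] at this
      omega
  · rcases Nat.eq_zero_or_pos j with rfl | hjpos
    · rw [sVal_zero]; omega
    · rw [sVal_mid hjpos (by omega), sVal_mid (by omega) (by omega)]
      exact le_of_lt (sort_lt (by omega) (by omega))

lemma filter_card_eq (hS : S ⊆ Finset.Icc 1 (n - 1)) {j v : ℕ} (hj : j ≤ S.card)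
    (hv1 : sVal n S j < v) (hv2 : v ≤ sVal n S (j + 1)) :
    (S.filter (· < v)).card = j := by
  have hlen : (S.sort (· ≤ ·)).length = S.card := Finset.length_sort _
  have hkey : ∀ i (hi : i < (S.sort (· ≤ ·)).length), ((S.sort (· ≤ ·))[i] < v ↔ i < j) := by
    intro i hi
    constructor
    · intro hlv
      by_contra hij
      push_neg at hij
      have hj1 : j + 1 ≤ S.card := by omega
      rw [sVal_mid (by omega) hj1] at hv2
      simp only [Nat.add_sub_cancel] at hv2
      have : (S.sort (· ≤ ·))[j]'(by omega) ≤ (S.sort (· ≤ ·))[i] := by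
        rcases Nat.eq_or_lt_of_le hij with rfl | h
        · exact le_rfl
        · exact le_of_lt (sort_lt h (by omega))
      omega
    · intro hij
      have hj1 : 1 ≤ j := by omega
      rw [sVal_mid hj1 hj] at hv1
      have : (S.sort (· ≤ ·))[i] ≤ (S.sort (· ≤ ·))[j - 1]'(by omega) := by
        rcases Nat.eq_or_lt_of_le (show i ≤ j - 1 by omega) with rfl | h
        · exact le_rfl
        · exact le_of_lt (sort_lt h (by omega))
      omega
  have hset : S.filter (· < v) = ((S.sort (· ≤ ·)).take j).toFinset := by
    ext x
    rw [Finset.mem_filter, List.mem_toFinset]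
    constructor
    · rintro ⟨hxS, hxv⟩
      rw [← Finset.mem_sort (α := ℕ) (· ≤ ·), List.mem_iff_getElem] at hxS
      obtain ⟨i, hi, rfl⟩ := hxS
      rw [List.mem_iff_getElem]
      have hij : i < j := (hkey i hi).1 hxv
      refine ⟨i, by rw [List.length_take]; omega, ?_⟩
      rw [List.getElem_take]
    · intro hx
      rw [List.mem_iff_getElem] at hx
      obtain ⟨i, hi, rfl⟩ := hx
      rw [List.length_take] at hi
      rw [List.getElem_take]
      have hi' : i < (S.sort (· ≤ ·)).length := by omega
      refine ⟨?_, (hkey i hi').2 (by omega)⟩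
      rw [← Finset.mem_sort (α := ℕ) (· ≤ ·)]
      exact List.getElem_mem _
  rw [hset, List.toFinset_card_of_nodup ((Finset.sort_nodup _ _).sublist (List.take_sublist _ _)),
    List.length_take]
  omega

lemma prod_c_eq (hS : S ⊆ Finset.Icc 1 (n - 1)) (hn : 1 ≤ n) :
    ∏ v ∈ Finset.Icc 1 n, ((S.filter (· < v)).card + 1)
      = ∏ r ∈ Finset.range (S.card + 1), (r + 1) ^ (sVal n S (r + 1) - sVal n S r) := by
  have key : ∀ j ≤ S.card + 1,
      ∏ v ∈ Finset.Ioc 0 (sVal n S j), ((S.filter (· < v)).card + 1)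
        = ∏ r ∈ Finset.range j, (r + 1) ^ (sVal n S (r + 1) - sVal n S r) := by
    intro j hj
    induction j with
    | zero => simp [sVal_zero]
    | succ j ih =>
      have hj' : j ≤ S.card := by omega
      rw [← Finset.prod_Ioc_consecutive _ (Nat.zero_le (sVal n S j)) (sVal_mono hS hn hj'),
        ih (by omega), Finset.prod_range_succ]
      congr 1
      have hconst : ∀ v ∈ Finset.Ioc (sVal n S j) (sVal n S (j + 1)),
          ((S.filter (· < v)).card + 1) = j + 1 := by
        intro v hv
        rw [Finset.mem_Ioc] at hv
        rw [filter_card_eq hS hj' hv.1 hv.2]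
      rw [Finset.prod_congr rfl hconst, Finset.prod_const, Nat.card_Ioc]
  have := key (S.card + 1) le_rfl
  rw [sVal_top] at this
  rw [show (1 : ℕ) = 0 + 1 from rfl, Finset.Icc_add_one_left_eq_Ioc]
  exact this

end SVal

instance CCFintype (n : ℕ) (S : Finset ℕ) : Fintype (CC n S) := Pi.instFintype

lemma CC_card (n : ℕ) (S : Finset ℕ) :
    Nat.card (CC n S)
      = ∏ r ∈ Finset.range (S.card + 1), (r + 1) ^ (sVal n S (r + 1) - sVal n S r) := by
  have h : Nat.card (CC n S) = Nat.card ((r : Fin (S.card + 1)) →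
      Fin (sVal n S ((r : ℕ) + 1) - sVal n S (r : ℕ)) → Fin ((r : ℕ) + 1)) := rfl
  rw [h, Nat.card_pi]
  have h2 : ∀ r : Fin (S.card + 1),
      Nat.card (Fin (sVal n S ((r : ℕ) + 1) - sVal n S (r : ℕ)) → Fin ((r : ℕ) + 1))
        = ((r : ℕ) + 1) ^ (sVal n S ((r : ℕ) + 1) - sVal n S (r : ℕ)) := by
    intro r
    rw [Nat.card_fun]
    simp
  rw [Finset.prod_congr rfl (fun r _ => h2 r)]
  exact Fin.prod_univ_eq_prod_range
    (fun r => (r + 1) ^ (sVal n S (r + 1) - sVal n S r)) (S.card + 1)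


/-- For `S = {s_1 < ⋯ < s_k} ⊆ {1, …, n-1}` (with `s_0 = 0`, `s_{k+1} = n`), the set of
permutations `π` of `{1, …, n}` with `A(π) ⊆ S` is in bijection with
`CC_n(S) = [0,k]^(s_{k+1}-s_k) × ⋯ × [0,0]^(s_1-s_0)`; in particular the two sets have
the same cardinality. -/
theorem ascentBottoms_subset_equiv_constructionChoices (n : ℕ) (hn : 1 ≤ n) (S : Finset ℕ)
    (hS : S ⊆ Finset.Icc 1 (n - 1)) :
    Nonempty ({π : Equiv.Perm (Fin n) // ascentBottoms π ⊆ S} ≃ CC n S) ∧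
      Nat.card {π : Equiv.Perm (Fin n) // ascentBottoms π ⊆ S} = Nat.card (CC n S) := by
  have hS1 : ∀ s ∈ S, 1 ≤ s := fun s hs => (Finset.mem_Icc.1 (hS hs)).1
  have hreindex : ∏ v ∈ Finset.Icc 1 n, ((S.filter (· < v)).card + 1)
      = ∏ v ∈ Finset.range n, ((S.filter (· < v + 1)).card + 1) := by
    rw [show Finset.Icc 1 n = Finset.Ico 1 (n + 1) from by
        rw [Finset.Ico_add_one_right_eq_Icc], Finset.prod_Ico_eq_prod_range]
    simp only [Nat.add_sub_cancel]
    exact Finset.prod_congr rfl (fun v _ => by rw [Nat.add_comm 1 v])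
  have hcard : Nat.card {π : Equiv.Perm (Fin n) // ascentBottoms π ⊆ S} = Nat.card (CC n S) := by
    rw [Nat.card_eq_fintype_card, Fintype.card_subtype, A_card_eq_W_card n hn S, W_card hS1 n,
      CC_card, ← prod_c_eq hS hn, hreindex]
  exact ⟨⟨Fintype.equivOfCardEq (by
    rw [← Nat.card_eq_fintype_card, ← Nat.card_eq_fintype_card]; exact hcard)⟩, hcard⟩
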